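/- Let p be a prime number. In the commutative ring ℤ[X]/(X^p − 1), let ξ denote the image of the polynomial ∏_{ℓ=1}^{p−1} (1 − X^ℓ). Then ξ² = p·ξ. -/

import Mathlib

open Polynomial Finset

private lemma aux_nthRootsFinset_eq_image {p : ℕ} (hp : p.Prime) {μ : ℂ}
    (hμ : IsPrimitiveRoot μ p) :
    nthRootsFinset p (1 : ℂ) = (Finset.range p).image (μ ^ ·) := by
  haveI : NeZero p := ⟨hp.ne_zero⟩
  ext x
  simp only [Polynomial.mem_nthRootsFinset hp.pos, Finset.mem_image, Finset.mem_range]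
  constructor
  · intro hx
    obtain ⟨i, hi, hix⟩ := hμ.eq_pow_of_pow_eq_one hx
    exact ⟨i, hi, hix⟩
  · rintro ⟨i, -, rfl⟩
    rw [← pow_mul, mul_comm, pow_mul, hμ.pow_eq_one, one_pow]

private lemma aux_prod_one_sub_pow {p : ℕ} (hp : p.Prime) {μ : ℂ}
    (hμ : IsPrimitiveRoot μ p) :
    ∏ i ∈ Finset.range (p - 1), (1 - μ ^ (i + 1)) = (p : ℂ) := by
  have hp1 : p - 1 + 1 = p := Nat.sub_add_cancel hp.one_lt.le
  have hXp : (X : ℂ[X]) ^ p - 1 = ∏ i ∈ Finset.range p, (X - C (μ ^ i)) := by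
    rw [X_pow_sub_one_eq_prod hp.pos hμ, aux_nthRootsFinset_eq_image hp hμ,
      Finset.prod_image]
    intro a ha b hb hab
    exact hμ.pow_inj (Finset.mem_range.mp ha) (Finset.mem_range.mp hb) hab
  have hpeel : ∏ i ∈ Finset.range p, ((X : ℂ[X]) - C (μ ^ i))
      = (∏ i ∈ Finset.range (p - 1), (X - C (μ ^ (i + 1)))) * (X - 1) := by
    have h := Finset.prod_range_succ' (fun i => (X : ℂ[X]) - C (μ ^ i)) (p - 1)
    rw [hp1] at h
    simpa using h
  have hgeom : (∑ i ∈ Finset.range p, (X : ℂ[X]) ^ i) * (X - 1) = X ^ p - 1 :=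
    geom_sum_mul X p
  have hne : (X : ℂ[X]) - 1 ≠ 0 := by
    have := X_sub_C_ne_zero (1 : ℂ)
    simpa using this
  have hcancel : ∏ i ∈ Finset.range (p - 1), ((X : ℂ[X]) - C (μ ^ (i + 1)))
      = ∑ i ∈ Finset.range p, (X : ℂ[X]) ^ i := by
    apply mul_right_cancel₀ hne
    rw [hgeom, hXp, hpeel]
  have h := congrArg (Polynomial.eval 1) hcancel
  simpa [Polynomial.eval_prod, Polynomial.eval_finset_sum] using h

private lemma aux_key_dvd {p : ℕ} (hp : p.Prime) :
    ((X : Polynomial ℤ) ^ p - 1) ∣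
      (∏ i ∈ Finset.range (p - 1), (1 - X ^ (i + 1))
        + ∑ i ∈ Finset.range p, X ^ i - C (p : ℤ)) := by
  have hmonic : ((X : Polynomial ℤ) ^ p - 1).Monic := by
    simpa using monic_X_pow_sub_C (1 : ℤ) hp.ne_zero
  rw [← Polynomial.map_dvd_map (Int.castRingHom ℂ) Int.cast_injective hmonic]
  simp only [Polynomial.map_sub, Polynomial.map_add, Polynomial.map_pow, Polynomial.map_X,
    Polynomial.map_one, Polynomial.map_prod, Polynomial.map_sum, Polynomial.map_C,
    Polynomial.map_natCast, map_natCast]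
  obtain ⟨μ, hμ⟩ : ∃ μ : ℂ, IsPrimitiveRoot μ p :=
    ⟨_, Complex.isPrimitiveRoot_exp p hp.ne_zero⟩
  rw [X_pow_sub_one_eq_prod hp.pos hμ]
  apply Finset.prod_dvd_of_coprime
  · intro a _ b _ hab
    exact pairwise_coprime_X_sub_C Function.injective_id hab
  · intro η hη
    rw [dvd_iff_isRoot]
    have hηp : η ^ p = 1 := (Polynomial.mem_nthRootsFinset hp.pos (1 : ℂ)).mp hη
    simp only [IsRoot, eval_sub, eval_add, eval_prod, eval_finset_sum, eval_pow, eval_one,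
      eval_X, eval_C, eval_natCast]
    by_cases h1 : η = 1
    · subst h1
      have h0 : (0 : ℕ) ∈ Finset.range (p - 1) :=
        Finset.mem_range.mpr (by have := hp.two_le; omega)
      have hz : ∏ i ∈ Finset.range (p - 1), (1 - (1 : ℂ) ^ (i + 1)) = 0 :=
        Finset.prod_eq_zero h0 (by simp)
      have hne1 : p - 1 ≠ 0 := by have := hp.two_le; omega
      simp [hz, hne1]
    · have hord : IsPrimitiveRoot η p := by
        have h2 : orderOf η ∣ p := orderOf_dvd_of_pow_eq_one hηp
        rcases (hp.eq_one_or_self_of_dvd _ h2) with h | h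
        · exact absurd (orderOf_eq_one_iff.mp h) h1
        · have := IsPrimitiveRoot.orderOf η
          rwa [h] at this
      have hsum : ∑ i ∈ Finset.range p, η ^ i = 0 := by
        have h := geom_sum_mul η p
        rw [hηp, sub_self] at h
        rcases mul_eq_zero.mp h with h' | h'
        · exact h'
        · exact absurd (sub_eq_zero.mp h') h1
      rw [aux_prod_one_sub_pow hp hord, hsum]
      ring

private lemma aux_sum_sq {R : Type*} [CommRing R] (x s : R) (p : ℕ)
    (hs : s = ∑ i ∈ Finset.range p, x ^ i) (hx : s * x = s) :
    s * s = (p : R) * s := by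
  have hpow : ∀ i : ℕ, x ^ i * s = s := by
    intro i
    induction i with
    | zero => simp
    | succ n ih => rw [pow_succ, mul_comm (x ^ n) x, mul_assoc, ih, mul_comm, hx]
  calc s * s = (∑ i ∈ Finset.range p, x ^ i) * s := by rw [← hs]
    _ = ∑ i ∈ Finset.range p, x ^ i * s := Finset.sum_mul _ _ _
    _ = ∑ _i ∈ Finset.range p, s := Finset.sum_congr rfl fun i _ => hpow i
    _ = (p : R) * s := by simp [Finset.sum_const, nsmul_eq_mul]

theorem stmt0 (p : ℕ) (hp : p.Prime)
    (ξ : Polynomial ℤ ⧸ Ideal.span {(Polynomial.X : Polynomial ℤ) ^ p - 1})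
    (hξ : ξ = Ideal.Quotient.mk (Ideal.span {(Polynomial.X : Polynomial ℤ) ^ p - 1})
      (∏ ℓ ∈ Finset.Icc 1 (p - 1), (1 - Polynomial.X ^ ℓ))) :
    ξ ^ 2 = (p : Polynomial ℤ ⧸ Ideal.span {(Polynomial.X : Polynomial ℤ) ^ p - 1}) * ξ := by
  subst hξ
  set π := Ideal.Quotient.mk (Ideal.span {(Polynomial.X : Polynomial ℤ) ^ p - 1}) with hπ
  have hπ0 : π ((X : Polynomial ℤ) ^ p - 1) = 0 := by
    rw [hπ, Ideal.Quotient.eq_zero_iff_mem]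
    exact Ideal.subset_span rfl
  have hσX : π (∑ i ∈ Finset.range p, X ^ i) * π X = π (∑ i ∈ Finset.range p, X ^ i) := by
    have h : π ((∑ i ∈ Finset.range p, X ^ i) * (X - 1)) = 0 := by
      rw [geom_sum_mul]; exact hπ0
    rw [map_mul, map_sub, map_one, mul_sub, mul_one] at h
    exact sub_eq_zero.mp h
  have hσeq : π (∑ i ∈ Finset.range p, X ^ i) = ∑ i ∈ Finset.range p, (π X) ^ i := by
    rw [map_sum]; simp [map_pow]
  have hσ2 := aux_sum_sq (π X) (π (∑ i ∈ Finset.range p, X ^ i)) p hσeq hσX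
  have hficc : ∏ ℓ ∈ Finset.Icc 1 (p - 1), (1 - (X : Polynomial ℤ) ^ ℓ)
      = ∏ i ∈ Finset.range (p - 1), (1 - X ^ (i + 1)) := by
    have h1 : Finset.Icc 1 (p - 1) = Finset.Ico 1 p := by
      ext a
      simp only [Finset.mem_Icc, Finset.mem_Ico]
      have := hp.two_le
      omega
    rw [h1, Finset.prod_Ico_eq_prod_range]
    simp [add_comm]
  obtain ⟨c, hc⟩ := aux_key_dvd hp
  have hπc : π (∏ i ∈ Finset.range (p - 1), (1 - X ^ (i + 1)))
      + π (∑ i ∈ Finset.range p, X ^ i) - (p : Polynomial ℤ ⧸ _) = 0 := by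
    have h : π (∏ i ∈ Finset.range (p - 1), (1 - X ^ (i + 1))
        + ∑ i ∈ Finset.range p, X ^ i - C (p : ℤ)) = 0 := by
      rw [hc, map_mul, hπ0, zero_mul]
    rw [map_sub, map_add] at h
    rwa [map_natCast (C : ℤ →+* Polynomial ℤ) p, map_natCast] at h
  rw [hficc]
  linear_combination (π (∏ i ∈ Finset.range (p - 1), (1 - X ^ (i + 1)))
    - π (∑ i ∈ Finset.range p, X ^ i)) * hπc + hσ2
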